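/- arXiv:1407.4145 — 5 statements merged into one kernel-verified Lean document; each statement's English description precedes it below -/
import Mathlib

section
/- For any real α, positive integers m and k, the derivative of the Type III exceptional X_m-Laguerre polynomial factors as (L_{m,m+k}^{III,α}(x))' = (m+k)·L_{k-1}^{α+1}(x)·L_m^{-α-1}(-x). -/
open Finset

/-- Generalized Laguerre polynomial `L_n^α(x) = ∑_{k=0}^n (-1)^k binom(n+α, n-k) x^k / k!`. -/
noncomputable def lag (α : ℝ) (n : ℕ) (x : ℝ) : ℝ :=
  ∑ k ∈ Finset.range (n + 1),
    (-1 : ℝ) ^ k * (∏ j ∈ Finset.range (n - k), (α + (k : ℝ) + 1 + (j : ℝ))) /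
      ((Nat.factorial (n - k) : ℝ) * (Nat.factorial k : ℝ)) * x ^ k

/-- Generalized Laguerre polynomial with integer index, with the convention
`L_n^α := 0` for `n < 0`. -/
noncomputable def lagZ (α : ℝ) (n : ℤ) (x : ℝ) : ℝ :=
  if 0 ≤ n then lag α n.toNat x else 0

/-- The Type III exceptional `X_m`-Laguerre polynomial of degree `m + k` (for `k ≥ 1`):
`L_{m,m+k}^{III,α}(x) = x L_{k-2}^{α+2}(x) L_m^{-α-1}(-x) + (m+1) L_{k-1}^{α+1}(x) L_{m+1}^{-α-2}(-x)`. -/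
noncomputable def LIII (α : ℝ) (m k : ℕ) (x : ℝ) : ℝ :=
  x * lagZ (α + 2) ((k : ℤ) - 2) x * lag (-α - 1) m (-x)
    + ((m : ℝ) + 1) * lag (α + 1) (k - 1) x * lag (-α - 2) (m + 1) (-x)

open Polynomial

/-- Coefficients of the generalized Laguerre polynomial. -/
noncomputable def lcoef (α : ℝ) (n j : ℕ) : ℝ :=
  (-1 : ℝ) ^ j * (∏ i ∈ Finset.range (n - j), (α + (j : ℝ) + 1 + (i : ℝ))) /
    ((Nat.factorial (n - j) : ℝ) * (Nat.factorial j : ℝ))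

/-- Rising factorial. -/
noncomputable def pr (γ : ℝ) (d : ℕ) : ℝ := ∏ i ∈ Finset.range d, (γ + (i : ℝ))

/-- Laguerre polynomial as a `Polynomial ℝ`. -/
noncomputable def lagP (α : ℝ) (n : ℕ) : Polynomial ℝ :=
  ∑ j ∈ Finset.range (n + 1), Polynomial.monomial j (lcoef α n j)

lemma lag_eq (α : ℝ) (n : ℕ) (x : ℝ) : lag α n x = (lagP α n).eval x := by
  simp [lag, lagP, lcoef, Polynomial.eval_finset_sum]

lemma lagP_coeff (α : ℝ) (n t : ℕ) :
    (lagP α n).coeff t = if t ≤ n then lcoef α n t else 0 := by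
  simp [lagP, Polynomial.finset_sum_coeff, Polynomial.coeff_monomial,
    Finset.sum_ite_eq, Nat.lt_succ_iff]

lemma lcoef_eq {n j d : ℕ} (α : ℝ) (h : n = j + d) :
    lcoef α n j = (-1 : ℝ) ^ j * pr (α + j + 1) d /
      ((Nat.factorial d : ℝ) * (Nat.factorial j : ℝ)) := by
  subst h; simp [lcoef, pr, Nat.add_sub_cancel_left]

lemma lcoef_zero (α : ℝ) (n : ℕ) :
    lcoef α n 0 = pr (α + 1) n / (Nat.factorial n : ℝ) := by
  simp [lcoef, pr]

lemma pr_zero (γ : ℝ) : pr γ 0 = 1 := by simp [pr]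

lemma pr_succ (γ : ℝ) (d : ℕ) : pr γ (d + 1) = γ * pr (γ + 1) d := by
  rw [pr, Finset.prod_range_succ']
  simp only [Nat.cast_zero, add_zero]
  rw [mul_comm]
  congr 1
  apply Finset.prod_congr rfl
  intro i _
  push_cast; ring

lemma fact_ne (n : ℕ) : (Nat.factorial n : ℝ) ≠ 0 :=
  Nat.cast_ne_zero.mpr (Nat.factorial_ne_zero n)

/-- Derivative of the Laguerre polynomial: `(L_{n+1}^α)' = -L_n^{α+1}`. -/
lemma lagP_derivative (α : ℝ) (n : ℕ) :
    Polynomial.derivative (lagP α (n + 1)) = -lagP (α + 1) n := by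
  ext t
  rw [Polynomial.coeff_derivative]
  simp only [Polynomial.coeff_neg, lagP_coeff]
  by_cases ht : t ≤ n
  · rw [if_pos (by omega : t + 1 ≤ n + 1), if_pos ht]
    obtain ⟨d, rfl⟩ : ∃ d, n = t + d := ⟨n - t, by omega⟩
    rw [lcoef_eq α (show t + d + 1 = (t + 1) + d by omega),
        lcoef_eq (α + 1) (rfl : t + d = t + d)]
    push_cast [Nat.factorial_succ, pow_succ]
    rw [show α + ((t : ℝ) + 1) + 1 = α + 1 + t + 1 by ring]
    field_simp
  · rw [if_neg (by omega : ¬ t + 1 ≤ n + 1), if_neg ht]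
    simp

/-- Three-term identity `x L_{a}^{β+2} = (β+1-x) L_{a+1}^{β+1} - (a+2) L_{a+2}^β`. -/
lemma lagP_P1 (β : ℝ) (a : ℕ) :
    X * lagP (β + 2) a
      = (C (β + 1) - X) * lagP (β + 1) (a + 1) - C ((a : ℝ) + 2) * lagP β (a + 2) := by
  ext t
  rcases t with _ | s
  · simp only [mul_coeff_zero, coeff_X_zero, zero_mul, coeff_sub, sub_mul,
      coeff_C_mul, coeff_C_zero, lagP_coeff, if_pos (Nat.zero_le _)]
    rw [lcoef_zero, lcoef_zero, pr_succ (β + 1) (a + 1)]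
    rw [show β + 1 + 1 = β + 2 by ring]
    push_cast [Nat.factorial_succ]
    field_simp
    ring
  · simp only [coeff_X_mul, coeff_sub, sub_mul, coeff_C_mul, lagP_coeff]
    by_cases hs : s ≤ a
    · rw [if_pos hs, if_pos (by omega : s + 1 ≤ a + 1), if_pos (by omega : s ≤ a + 1),
        if_pos (by omega : s + 1 ≤ a + 2)]
      obtain ⟨d, rfl⟩ : ∃ d, a = s + d := ⟨a - s, by omega⟩
      rw [lcoef_eq (β + 2) (rfl : s + d = s + d),
          lcoef_eq (β + 1) (show s + d + 1 = (s + 1) + d by omega),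
          lcoef_eq (β + 1) (show s + d + 1 = s + (d + 1) by omega),
          lcoef_eq β (show s + d + 2 = (s + 1) + (d + 1) by omega)]
      rw [show β + 1 + ((s + 1 : ℕ) : ℝ) + 1 = β + 2 + (s : ℝ) + 1 by push_cast; ring]
      rw [show β + ((s + 1 : ℕ) : ℝ) + 1 = β + 1 + (s : ℝ) + 1 by push_cast; ring]
      rw [pr_succ (β + 1 + (s : ℝ) + 1) d]
      rw [show β + 1 + (s : ℝ) + 1 + 1 = β + 2 + (s : ℝ) + 1 by ring]
      push_cast [Nat.factorial_succ, pow_succ]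
      field_simp
      ring
    · rw [if_neg hs, if_neg (by omega : ¬ s + 1 ≤ a + 1)]
      by_cases hs1 : s ≤ a + 1
      · have : s = a + 1 := by omega
        subst this
        rw [if_pos le_rfl, if_pos (by omega : a + 1 + 1 ≤ a + 2)]
        rw [lcoef_eq (β + 1) (show a + 1 = (a + 1) + 0 by omega),
            lcoef_eq β (show a + 2 = (a + 1 + 1) + 0 by omega)]
        rw [pr_zero, pr_zero]
        push_cast [Nat.factorial_succ, pow_succ]
        field_simp
        ring
      · rw [if_neg hs1, if_neg (by omega : ¬ s + 1 ≤ a + 2)]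
        ring

/-- Three-term identity `(x-β) L_{m+1}^β + x L_m^{β+1} + (m+2) L_{m+2}^{β-1} = 0`. -/
lemma lagP_P2 (β : ℝ) (m : ℕ) :
    (X - C β) * lagP β (m + 1) + X * lagP (β + 1) m
      + C ((m : ℝ) + 2) * lagP (β - 1) (m + 2) = 0 := by
  ext t
  rcases t with _ | s
  · simp only [coeff_add, sub_mul, coeff_sub, coeff_C_mul, mul_coeff_zero,
      coeff_X_zero, zero_mul, coeff_zero, lagP_coeff, if_pos (Nat.zero_le _),
      coeff_C_zero]
    rw [lcoef_zero, lcoef_zero, pr_succ (β - 1 + 1) (m + 1)]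
    rw [show β - 1 + 1 = β by ring]
    push_cast [Nat.factorial_succ]
    field_simp
    ring
  · simp only [coeff_add, sub_mul, coeff_sub, coeff_C_mul, coeff_X_mul,
      coeff_zero, lagP_coeff]
    by_cases hs : s ≤ m
    · rw [if_pos (by omega : s ≤ m + 1), if_pos (by omega : s + 1 ≤ m + 1),
        if_pos hs, if_pos (by omega : s + 1 ≤ m + 2)]
      obtain ⟨d, rfl⟩ : ∃ d, m = s + d := ⟨m - s, by omega⟩
      rw [lcoef_eq β (show s + d + 1 = s + (d + 1) by omega),
          lcoef_eq β (show s + d + 1 = (s + 1) + d by omega),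
          lcoef_eq (β + 1) (rfl : s + d = s + d),
          lcoef_eq (β - 1) (show s + d + 2 = (s + 1) + (d + 1) by omega)]
      rw [show β + ((s + 1 : ℕ) : ℝ) + 1 = β + 1 + (s : ℝ) + 1 by push_cast; ring]
      rw [show β - 1 + ((s + 1 : ℕ) : ℝ) + 1 = β + (s : ℝ) + 1 by push_cast; ring]
      rw [pr_succ (β + (s : ℝ) + 1) d]
      rw [show β + (s : ℝ) + 1 + 1 = β + 1 + (s : ℝ) + 1 by ring]
      push_cast [Nat.factorial_succ, pow_succ]
      field_simp
      ring
    · by_cases hs1 : s ≤ m + 1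
      · have : s = m + 1 := by omega
        subst this
        rw [if_pos le_rfl, if_neg (by omega : ¬ m + 1 + 1 ≤ m + 1), if_neg hs,
          if_pos (by omega : m + 1 + 1 ≤ m + 2)]
        rw [lcoef_eq β (show m + 1 = (m + 1) + 0 by omega),
            lcoef_eq (β - 1) (show m + 2 = (m + 1 + 1) + 0 by omega)]
        rw [pr_zero, pr_zero]
        push_cast [Nat.factorial_succ, pow_succ]
        field_simp
        ring
      · rw [if_neg (by omega : ¬ s ≤ m + 1), if_neg (by omega : ¬ s + 1 ≤ m + 1),
          if_neg hs, if_neg (by omega : ¬ s + 1 ≤ m + 2)]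
        ring

lemma lag_fun_eq (α : ℝ) (n : ℕ) : lag α n = fun x => (lagP α n).eval x :=
  funext (lag_eq α n)

/-- Evaluated version of `lagP_P1`. -/
lemma P1x (β : ℝ) (a : ℕ) (x : ℝ) :
    x * lag (β + 2) a x
      = (β + 1 - x) * lag (β + 1) (a + 1) x - ((a : ℝ) + 2) * lag β (a + 2) x := by
  have h := congrArg (Polynomial.eval x) (lagP_P1 β a)
  simpa [← lag_eq] using h

/-- Evaluated version of `lagP_P2`. -/
lemma P2x (β : ℝ) (m : ℕ) (x : ℝ) :
    (x - β) * lag β (m + 1) x + x * lag (β + 1) m x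
      + ((m : ℝ) + 2) * lag (β - 1) (m + 2) x = 0 := by
  have h := congrArg (Polynomial.eval x) (lagP_P2 β m)
  simpa [← lag_eq] using h

lemma lag_hasDerivAt (α β : ℝ) (n : ℕ) (h : β = α + 1) (x : ℝ) :
    HasDerivAt (lag α (n + 1)) (-(lag β n x)) x := by
  subst h
  have hp := Polynomial.hasDerivAt (lagP α (n + 1)) x
  rw [lagP_derivative] at hp
  rw [lag_fun_eq]
  simpa [lag_eq] using hp

lemma lag_neg_hasDerivAt (α β : ℝ) (n : ℕ) (h : β = α + 1) (x : ℝ) :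
    HasDerivAt (fun y : ℝ => lag α (n + 1) (-y)) (lag β n (-x)) x := by
  have h1 := (lag_hasDerivAt α β n h (-x)).comp x (hasDerivAt_neg x)
  simpa [Function.comp_def] using h1

lemma lag_zero (α x : ℝ) : lag α 0 x = 1 := by simp [lag]

lemma lag_one (α x : ℝ) : lag α 1 x = α + 1 - x := by
  simp [lag, Finset.sum_range_succ]
  ring

/-- `(L_{m,m+k}^{III,α}(x))' = (m+k) L_{k-1}^{α+1}(x) L_m^{-α-1}(-x)`. -/
theorem typeIII_deriv (α : ℝ) (m k : ℕ) (hm : 0 < m) (hk : 0 < k) (x : ℝ) :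
    deriv (LIII α m k) x = ((m : ℝ) + (k : ℝ)) * lag (α + 1) (k - 1) x * lag (-α - 1) m (-x) := by
  obtain ⟨m', rfl⟩ : ∃ m', m = m' + 1 := ⟨m - 1, by omega⟩
  have hB : HasDerivAt (fun y : ℝ => lag (-α - 1) (m' + 1) (-y)) (lag (-α) m' (-x)) x :=
    lag_neg_hasDerivAt _ _ _ (by ring) x
  have hD : HasDerivAt (fun y : ℝ => lag (-α - 2) (m' + 1 + 1) (-y))
      (lag (-α - 1) (m' + 1) (-x)) x :=
    lag_neg_hasDerivAt _ _ _ (by ring) x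
  rcases Nat.lt_or_ge k 3 with h3 | h3
  · interval_cases k
    · -- k = 1
      have hL : LIII α (m' + 1) 1 = fun y =>
          ((m' : ℝ) + 2) * lag (-α - 2) (m' + 1 + 1) (-y) := by
        funext y
        have hneg : ¬ (0 : ℤ) ≤ ((1 : ℕ) : ℤ) - 2 := by norm_num
        simp only [LIII, lagZ, if_neg hneg, show (1 : ℕ) - 1 = 0 from rfl, lag_zero]
        push_cast
        ring
      have hF : HasDerivAt (fun y : ℝ => ((m' : ℝ) + 2) * lag (-α - 2) (m' + 1 + 1) (-y))
          (((m' : ℝ) + 2) * lag (-α - 1) (m' + 1) (-x)) x := hD.const_mul _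
      rw [hL, hF.deriv]
      simp only [show (1 : ℕ) - 1 = 0 from rfl, lag_zero]
      push_cast
      ring
    · -- k = 2
      have hC1 : HasDerivAt (lag (α + 1) 1) (-(lag (α + 2) 0 x)) x :=
        lag_hasDerivAt _ _ 0 (by ring) x
      have hL : LIII α (m' + 1) 2 = fun y =>
          y * lag (-α - 1) (m' + 1) (-y)
            + ((m' : ℝ) + 2) * lag (α + 1) 1 y * lag (-α - 2) (m' + 1 + 1) (-y) := by
        funext y
        have h0 : ((2 : ℕ) : ℤ) - 2 = (0 : ℤ) := by norm_num
        simp only [LIII, lagZ, h0, if_pos (le_refl (0 : ℤ)), Int.toNat_zero,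
          show (2 : ℕ) - 1 = 1 from rfl, lag_zero]
        push_cast
        ring
      have hF : HasDerivAt (fun y : ℝ =>
          y * lag (-α - 1) (m' + 1) (-y)
            + ((m' : ℝ) + 2) * lag (α + 1) 1 y * lag (-α - 2) (m' + 1 + 1) (-y)) _ x :=
        ((hasDerivAt_id x).mul hB).add
          (((hasDerivAt_const x ((m' : ℝ) + 2)).mul hC1).mul hD)
      rw [hL, hF.deriv]
      have h2 := P2x (-α - 1) m' (-x)
      simp only [id_eq, show (-α - 1 + 1 : ℝ) = -α by ring,
        show (-α - 1 - 1 : ℝ) = -α - 2 by ring,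
        show m' + 1 + 1 = m' + 2 from rfl] at h2 ⊢
      simp only [show (2 : ℕ) - 1 = 1 from rfl, lag_zero, lag_one]
      simp only [Pi.mul_apply, id_eq, lag_one]
      push_cast
      linear_combination (-1 : ℝ) * h2
  · obtain ⟨u, rfl⟩ : ∃ u, k = u + 3 := ⟨k - 3, by omega⟩
    have hA : HasDerivAt (lag (α + 2) (u + 1)) (-(lag (α + 3) u x)) x :=
      lag_hasDerivAt _ _ _ (by ring) x
    have hC : HasDerivAt (lag (α + 1) (u + 2)) (-(lag (α + 2) (u + 1) x)) x :=
      lag_hasDerivAt _ _ _ (by ring) x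
    have hL : LIII α (m' + 1) (u + 3) = fun y =>
        y * lag (α + 2) (u + 1) y * lag (-α - 1) (m' + 1) (-y)
          + ((m' : ℝ) + 2) * lag (α + 1) (u + 2) y * lag (-α - 2) (m' + 1 + 1) (-y) := by
      funext y
      have h2 : ((u + 3 : ℕ) : ℤ) - 2 = ((u + 1 : ℕ) : ℤ) := by push_cast; ring
      simp only [LIII, h2, lagZ, if_pos (Int.natCast_nonneg _), Int.toNat_natCast,
        show u + 3 - 1 = u + 2 by omega]
      push_cast
      ring
    have hF : HasDerivAt (fun y : ℝ =>
        y * lag (α + 2) (u + 1) y * lag (-α - 1) (m' + 1) (-y)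
          + ((m' : ℝ) + 2) * lag (α + 1) (u + 2) y * lag (-α - 2) (m' + 1 + 1) (-y)) _ x :=
      (((hasDerivAt_id x).mul hA).mul hB).add
        (((hasDerivAt_const x ((m' : ℝ) + 2)).mul hC).mul hD)
    rw [hL, hF.deriv]
    have h1 := P1x (α + 1) u x
    have h2 := P2x (-α - 1) m' (-x)
    simp only [id_eq, show (α + 1 + 2 : ℝ) = α + 3 by ring,
      show (α + 1 + 1 : ℝ) = α + 2 by ring,
      show (-α - 1 + 1 : ℝ) = -α by ring,
      show (-α - 1 - 1 : ℝ) = -α - 2 by ring,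
      show m' + 1 + 1 = m' + 2 from rfl] at h1 h2 ⊢
    rw [show u + 3 - 1 = u + 2 by omega]
    simp only [Pi.mul_apply, id_eq]
    push_cast
    linear_combination (-(lag (-α - 1) (m' + 1) (-x))) * h1
      + (-(lag (α + 2) (u + 1) x)) * h2
end

section
/- For any real α with -1 < α < 0, positive integers m and k, the value of the Type III exceptional X_m-Laguerre polynomial at the origin is strictly negative: L_{m,m+k}^{III,α}(0) < 0. -/
open Finset

lemma lag_zero_s5 (α : ℝ) (n : ℕ) :
    lag α n 0 = (∏ j ∈ Finset.range n, (α + 1 + (j : ℝ))) / (Nat.factorial n : ℝ) := by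
  unfold lag
  rw [Finset.sum_eq_single 0]
  · simp
  · intro b _ hb
    simp [zero_pow hb]
  · intro h; simp at h

/-- for `-1 < α < 0` the Type III exceptional `X_m`-Laguerre polynomial is
strictly negative at the origin. -/
theorem typeIII_neg_at_zero (α : ℝ) (hα1 : -1 < α) (hα2 : α < 0) (m k : ℕ)
    (hm : 0 < m) (hk : 0 < k) :
    LIII α m k 0 < 0 := by
  have h0 : LIII α m k 0 = ((m : ℝ) + 1) * lag (α + 1) (k - 1) 0 * lag (-α - 2) (m + 1) 0 := by
    simp [LIII]
  rw [h0, lag_zero_s5, lag_zero_s5]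
  have h1 : (0:ℝ) < ∏ j ∈ Finset.range (k - 1), (α + 1 + 1 + (j : ℝ)) := by
    apply Finset.prod_pos
    intro j _
    have : (0:ℝ) ≤ (j:ℝ) := Nat.cast_nonneg j
    linarith
  have h2 : (∏ j ∈ Finset.range (m + 1), (-α - 2 + 1 + (j : ℝ))) < 0 := by
    rw [Finset.prod_range_succ']
    apply mul_neg_of_pos_of_neg
    · apply Finset.prod_pos
      intro j _
      have : (0:ℝ) ≤ (j:ℝ) := Nat.cast_nonneg j
      push_cast; linarith
    · push_cast; linarith
  have hf1 : (0:ℝ) < (Nat.factorial (k-1) : ℝ) := by positivity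
  have hf2 : (0:ℝ) < (Nat.factorial (m+1) : ℝ) := by positivity
  have hm1 : (0:ℝ) < (m:ℝ) + 1 := by positivity
  apply mul_neg_of_pos_of_neg
  · positivity
  · exact div_neg_of_neg_of_pos h2 hf2
end

section
/- Let α > 0 and m a positive integer. The Type I exceptional X_m-Laguerre differential expression ℓ_m^{I,α}[y](x) = -x y'' + (x - α - 1 + 2x·(L_m^{α-1}(-x))'/L_m^{α-1}(-x))·y' + (2α·(L_m^{α-1}(-x))'/L_m^{α-1}(-x) - m)·y satisfies ℓ_m^{I,α}[x^{-α}] = (-m - α)·x^{-α} for all x > 0. -/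
open Finset

/-- `x^{-α}` is an eigenfunction of the Type I exceptional
`X_m`-Laguerre expression with eigenvalue `-m-α`, for `α > 0` and `x > 0`. -/
theorem typeI_power_eigenfunction (α : ℝ) (hα : 0 < α) (m : ℕ) (hm : 0 < m)
    (x : ℝ) (hx : 0 < x) :
    -x * deriv (deriv (fun t : ℝ => t ^ (-α))) x
      + (x - α - 1 + 2 * x * (deriv (fun t => lag (α - 1) m (-t)) x / lag (α - 1) m (-x)))
          * deriv (fun t : ℝ => t ^ (-α)) x
      + (2 * α * (deriv (fun t => lag (α - 1) m (-t)) x / lag (α - 1) m (-x)) - (m : ℝ))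
          * x ^ (-α)
    = (-(m : ℝ) - α) * x ^ (-α) := by
  have hx0 : x ≠ 0 := ne_of_gt hx
  have h1 : ∀ t : ℝ, t ≠ 0 → deriv (fun s : ℝ => s ^ (-α)) t = -α * t ^ (-α - 1) := by
    intro t ht
    exact (Real.hasDerivAt_rpow_const (p := -α) (Or.inl ht)).deriv
  have h1x : deriv (fun s : ℝ => s ^ (-α)) x = -α * x ^ (-α - 1) := h1 x hx0
  have hev : deriv (fun s : ℝ => s ^ (-α)) =ᶠ[nhds x] fun t => -α * t ^ (-α - 1) := by
    filter_upwards [eventually_ne_nhds hx0] with t ht using h1 t ht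
  have h2 : deriv (deriv (fun t : ℝ => t ^ (-α))) x
      = -α * ((-α - 1) * x ^ (-α - 1 - 1)) := by
    rw [hev.deriv_eq]
    exact ((Real.hasDerivAt_rpow_const (p := -α - 1) (Or.inl hx0)).const_mul (-α)).deriv
  have hb : x * x ^ (-α - 1) = x ^ (-α) := by
    nth_rewrite 1 [← Real.rpow_one x]
    rw [← Real.rpow_add hx]; ring_nf
  have hc : x * x ^ (-α - 1 - 1) = x ^ (-α - 1) := by
    nth_rewrite 1 [← Real.rpow_one x]
    rw [← Real.rpow_add hx]; ring_nf
  rw [h1x, h2]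
  set R := deriv (fun t => lag (α - 1) m (-t)) x / lag (α - 1) m (-x)
  linear_combination (-α * (α + 1)) * hc + (-α - 2 * α * R) * hb
end

section
/- Let α be real, m a positive integer, and suppose L_m^{α-1}(-x) ≠ 0 for all x > 0. Define ℓ_m^{I,α}[z] = -x z'' + (x - α - 1 + 2x·(log L_m^{α-1}(-x))')·z' + (2α·(log L_m^{α-1}(-x))' - m)·z and ℓ_m^{III,-α}[y] = -x y'' + (-1 + α + x + 2x·(log L_m^{α-1}(-x))')·y' + (-m - α)·y. Then for every twice differentiable function y on (0,∞), setting z(x) = x^{-α}·y(x), one has ℓ_m^{I,α}[z](x) = x^{-α}·ℓ_m^{III,-α}[y](x) for all x > 0. -/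
open Finset

/-- the gauge transformation `z(x) = x^{-α} y(x)` relates the Type I
exceptional `X_m`-Laguerre expression `ℓ_m^{I,α}` to the Type III expression
`ℓ_m^{III,-α}`: `ℓ_m^{I,α}[z](x) = x^{-α} ℓ_m^{III,-α}[y](x)` on `(0,∞)`. -/
theorem typeI_typeIII_gauge (α : ℝ) (m : ℕ) (hm : 0 < m)
    (hL : ∀ x > (0 : ℝ), lag (α - 1) m (-x) ≠ 0)
    (y : ℝ → ℝ)
    (hy : ∀ x > (0 : ℝ), DifferentiableAt ℝ y x)
    (hy' : ∀ x > (0 : ℝ), DifferentiableAt ℝ (deriv y) x)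
    (x : ℝ) (hx : 0 < x) :
    -x * deriv (deriv (fun t : ℝ => t ^ (-α) * y t)) x
      + (x - α - 1 + 2 * x * (deriv (fun t => lag (α - 1) m (-t)) x / lag (α - 1) m (-x)))
          * deriv (fun t : ℝ => t ^ (-α) * y t) x
      + (2 * α * (deriv (fun t => lag (α - 1) m (-t)) x / lag (α - 1) m (-x)) - (m : ℝ))
          * (x ^ (-α) * y x)
    = x ^ (-α) *
        (-x * deriv (deriv y) x
          + (-1 + α + x
              + 2 * x * (deriv (fun t => lag (α - 1) m (-t)) x / lag (α - 1) m (-x)))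
              * deriv y x
          + (-(m : ℝ) - α) * y x) := by
  set c := deriv (fun t => lag (α - 1) m (-t)) x / lag (α - 1) m (-x) with hc
  have h1 : ∀ t ∈ Set.Ioi (0:ℝ), HasDerivAt (fun s : ℝ => s ^ (-α) * y s)
      (-α * t ^ (-α - 1) * y t + t ^ (-α) * deriv y t) t := by
    intro t ht
    have hp : HasDerivAt (fun s : ℝ => s ^ (-α)) (-α * t ^ (-α - 1)) t :=
      Real.hasDerivAt_rpow_const (Or.inl (ne_of_gt ht))
    exact hp.mul (hy t ht).hasDerivAt
  have hz1 : deriv (fun s : ℝ => s ^ (-α) * y s) x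
      = -α * x ^ (-α - 1) * y x + x ^ (-α) * deriv y x := (h1 x hx).deriv
  have hEq : deriv (fun s : ℝ => s ^ (-α) * y s)
      =ᶠ[nhds x] fun t => -α * t ^ (-α - 1) * y t + t ^ (-α) * deriv y t :=
    Filter.eventuallyEq_of_mem (Ioi_mem_nhds hx) (fun t ht => (h1 t ht).deriv)
  have hA : HasDerivAt (fun t : ℝ => -α * t ^ (-α - 1)) (-α * ((-α - 1) * x ^ (-α - 2))) x := by
    have := (Real.hasDerivAt_rpow_const (p := -α - 1) (Or.inl (ne_of_gt hx))).const_mul (-α)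
    have h2 : -α - 1 - 1 = -α - 2 := by ring
    simpa [h2, mul_comm, mul_left_comm, mul_assoc] using this
  have hp : HasDerivAt (fun s : ℝ => s ^ (-α)) (-α * x ^ (-α - 1)) x :=
    Real.hasDerivAt_rpow_const (Or.inl (ne_of_gt hx))
  have h2 : HasDerivAt (fun t : ℝ => -α * t ^ (-α - 1) * y t + t ^ (-α) * deriv y t)
      ((-α * ((-α - 1) * x ^ (-α - 2))) * y x + (-α * x ^ (-α - 1)) * deriv y x
        + ((-α * x ^ (-α - 1)) * deriv y x + x ^ (-α) * deriv (deriv y) x)) x :=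
    (hA.mul (hy x hx).hasDerivAt).add (hp.mul (hy' x hx).hasDerivAt)
  have hz2 : deriv (deriv (fun s : ℝ => s ^ (-α) * y s)) x
      = (-α * ((-α - 1) * x ^ (-α - 2))) * y x + (-α * x ^ (-α - 1)) * deriv y x
        + ((-α * x ^ (-α - 1)) * deriv y x + x ^ (-α) * deriv (deriv y) x) := by
    rw [hEq.deriv_eq]; exact h2.deriv
  have e1 : x ^ (-α - 1) = x ^ (-α) * x⁻¹ := by
    rw [show -α - 1 = -α + (-1) by ring, Real.rpow_add hx, Real.rpow_neg_one]
  have e2 : x ^ (-α - 2) = x ^ (-α) * x⁻¹ * x⁻¹ := by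
    rw [show -α - 2 = -α + (-1) + (-1) by ring, Real.rpow_add hx, Real.rpow_add hx,
      Real.rpow_neg_one]
  rw [hz1, hz2, e1, e2]
  field_simp
  ring
end

section
/- Let α be real and m a nonnegative integer. Define the first-order operators A_m^{III,α+1}[y](x) = x·L_m^{-α-1}(-x)·y'(x) - (m+1)·L_{m+1}^{-α-2}(-x)·y(x) and B_m^{III,α+1}[y](x) = y'(x)/L_m^{-α-1}(-x). Then for every twice-differentiable function y on an interval where L_m^{-α-1}(-x) ≠ 0, one has A_m^{III,α+1}[B_m^{III,α+1}[y]](x) + (m - α)·y(x) = x·y''(x) + (1 + α - x - 2x·(L_m^{-α-1}(-x))'/L_m^{-α-1}(-x))·y'(x) + (m - α)·y(x), i.e., -ℓ_m^{III,α} = A_m^{III,α+1}∘B_m^{III,α+1} + (m - α), where ℓ_m^{III,α}[y] = -x y'' + (-1-α+x+2x(L_m^{-α-1}(-x))'/L_m^{-α-1}(-x))·y' + (α-m)·y. -/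
open Finset

noncomputable def lc (β : ℝ) (n k : ℕ) : ℝ :=
  (-1 : ℝ) ^ k * (∏ j ∈ Finset.range (n - k), (β + (k : ℝ) + 1 + (j : ℝ))) /
      ((Nat.factorial (n - k) : ℝ) * (Nat.factorial k : ℝ))

lemma lag_eq_s12 (β : ℝ) (n : ℕ) (x : ℝ) :
    lag β n x = ∑ k ∈ Finset.range (n + 1), lc β n k * x ^ k := rfl

lemma hasDerivAt_lag_neg (β : ℝ) (n : ℕ) (x : ℝ) :
    HasDerivAt (fun t => lag β n (-t))
      (∑ k ∈ Finset.range (n + 1), lc β n k * ((k : ℝ) * (-x) ^ (k - 1) * (-1))) x := by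
  have h : (fun t => lag β n (-t))
      = fun t => ∑ k ∈ Finset.range (n + 1), lc β n k * (-t) ^ k := by
    funext t; exact lag_eq_s12 β n (-t)
  rw [h]
  apply HasDerivAt.fun_sum
  intro k _
  have h1 : HasDerivAt (fun t : ℝ => (-t) ^ k) ((k : ℝ) * (-x) ^ (k - 1) * (-1)) x := by
    have := (hasDerivAt_pow k (-x)).comp x (hasDerivAt_neg x)
    simpa [Function.comp_def] using this
  exact h1.const_mul _

lemma xD_eq (β x : ℝ) (n : ℕ) :
    x * (∑ k ∈ Finset.range (n + 1), lc β n k * ((k : ℝ) * (-x) ^ (k - 1) * (-1)))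
      = ∑ k ∈ Finset.range (n + 1), lc β n k * (k : ℝ) * (-x) ^ k := by
  rw [Finset.mul_sum]
  refine Finset.sum_congr rfl fun k _ => ?_
  cases k with
  | zero => simp
  | succ j =>
    have hp : (-x) ^ (j + 1) = (-x) ^ j * (-x) := pow_succ _ _
    simp only [Nat.add_sub_cancel, hp]
    push_cast
    ring

lemma coefA (α : ℝ) (m k : ℕ) (hk : k < m) :
    lc (-α - 1) m (k + 1) * (((k : ℝ) + 1) - α - 1) - lc (-α - 1) m k
      = ((m : ℝ) + 1) * lc (-α - 2) (m + 1) (k + 1) := by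
  have h1 : m - k = (m - k - 1) + 1 := by omega
  have h2 : m - (k + 1) = m - k - 1 := by omega
  have h3 : m + 1 - (k + 1) = m - k := by omega
  have hc : ((m - k - 1 : ℕ) : ℝ) = (m : ℝ) - (k : ℝ) - 1 := by
    have h4 : m - k - 1 = m - (k + 1) := by omega
    rw [h4, Nat.cast_sub (by omega)]; push_cast; ring
  have hQ : ∏ j ∈ Finset.range (m - k), (-α - 1 + (k : ℝ) + 1 + (j : ℝ))
      = (∏ j ∈ Finset.range (m - k - 1), (-α - 1 + ((k : ℝ) + 1) + 1 + (j : ℝ)))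
        * ((k : ℝ) - α) := by
    rw [h1, Finset.prod_range_succ']
    congr 1
    · refine Finset.prod_congr rfl fun j _ => ?_; push_cast; ring
    · push_cast; ring
  have hQ2 : ∏ j ∈ Finset.range (m - k), (-α - 2 + ((k : ℝ) + 1) + 1 + (j : ℝ))
      = ∏ j ∈ Finset.range (m - k), (-α - 1 + (k : ℝ) + 1 + (j : ℝ)) := by
    refine Finset.prod_congr rfl fun j _ => ?_; ring
  have hf1 : (Nat.factorial (m - k) : ℝ) = ((m : ℝ) - k) * Nat.factorial (m - k - 1) := by
    rw [h1, Nat.factorial_succ]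
    push_cast [hc]; ring
  have hf2 : (Nat.factorial (k + 1) : ℝ) = ((k : ℝ) + 1) * Nat.factorial k := by
    rw [Nat.factorial_succ]; push_cast; ring
  have hp : (-1 : ℝ) ^ (k + 1) = -(-1 : ℝ) ^ k := by rw [pow_succ]; ring
  unfold lc
  rw [h2, h3]
  push_cast
  rw [hQ2, hQ, hf1, hf2, hp]
  have hne1 : (Nat.factorial (m - k - 1) : ℝ) ≠ 0 := Nat.cast_ne_zero.2 (Nat.factorial_ne_zero _)
  have hne2 : (Nat.factorial k : ℝ) ≠ 0 := Nat.cast_ne_zero.2 (Nat.factorial_ne_zero _)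
  have hne3 : (m : ℝ) - (k : ℝ) ≠ 0 := by
    have : (k : ℝ) < (m : ℝ) := by exact_mod_cast hk
    linarith
  have hne4 : (k : ℝ) + 1 ≠ 0 := by positivity
  field_simp
  ring

lemma coefB (α : ℝ) (m : ℕ) :
    lc (-α - 1) m 0 * (-α - 1) = ((m : ℝ) + 1) * lc (-α - 2) (m + 1) 0 := by
  unfold lc
  have h : ∏ j ∈ Finset.range (m + 1), (-α - 2 + (0 : ℕ) + 1 + (j : ℝ))
      = (∏ j ∈ Finset.range m, (-α - 1 + (0 : ℕ) + 1 + (j : ℝ))) * (-α - 1) := by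
    rw [Finset.prod_range_succ']
    congr 1
    · refine Finset.prod_congr rfl fun j _ => ?_; push_cast; ring
    · push_cast; ring
  simp only [Nat.sub_zero] at *
  rw [h]
  have hf : (Nat.factorial (m + 1) : ℝ) = ((m : ℝ) + 1) * Nat.factorial m := by
    rw [Nat.factorial_succ]; push_cast; ring
  rw [hf]
  have hne1 : (Nat.factorial m : ℝ) ≠ 0 := Nat.cast_ne_zero.2 (Nat.factorial_ne_zero _)
  have hne2 : (m : ℝ) + 1 ≠ 0 := by positivity
  field_simp

lemma coefC (α : ℝ) (m : ℕ) :
    -lc (-α - 1) m m = ((m : ℝ) + 1) * lc (-α - 2) (m + 1) (m + 1) := by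
  unfold lc
  simp only [Nat.sub_self, Nat.add_sub_cancel_left, Nat.add_sub_cancel, Finset.range_zero,
    Finset.prod_empty, Nat.factorial_zero, Nat.cast_one, one_mul]
  have hf : (Nat.factorial (m + 1) : ℝ) = ((m : ℝ) + 1) * Nat.factorial m := by
    rw [Nat.factorial_succ]; push_cast; ring
  rw [hf]
  have hne1 : (Nat.factorial m : ℝ) ≠ 0 := Nat.cast_ne_zero.2 (Nat.factorial_ne_zero _)
  have hne2 : (m : ℝ) + 1 ≠ 0 := by positivity
  have hp : (-1 : ℝ) ^ (m + 1) = -(-1 : ℝ) ^ m := by rw [pow_succ]; ring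
  rw [hp]
  field_simp

lemma key (α x : ℝ) (m : ℕ) :
    (∑ k ∈ Finset.range (m + 1), lc (-α - 1) m k * ((k : ℝ) - α - 1) * x ^ k)
      - ∑ k ∈ Finset.range (m + 1), lc (-α - 1) m k * x ^ (k + 1)
    = ((m : ℝ) + 1) * ∑ k ∈ Finset.range (m + 2), lc (-α - 2) (m + 1) k * x ^ k := by
  have eA := Finset.sum_range_succ' (fun k => lc (-α - 1) m k * ((k : ℝ) - α - 1) * x ^ k) m
  have eB := Finset.sum_range_succ (fun k => lc (-α - 1) m k * x ^ (k + 1)) m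
  have eC1 := Finset.sum_range_succ (fun k => lc (-α - 2) (m + 1) k * x ^ k) (m + 1)
  have eC2 := Finset.sum_range_succ' (fun k => lc (-α - 2) (m + 1) k * x ^ k) m
  have hS : ∑ k ∈ Finset.range m,
      (lc (-α - 1) m (k + 1) * (((k + 1 : ℕ) : ℝ) - α - 1) * x ^ (k + 1)
        - lc (-α - 1) m k * x ^ (k + 1))
      = ((m : ℝ) + 1) * ∑ k ∈ Finset.range m, lc (-α - 2) (m + 1) (k + 1) * x ^ (k + 1) := by
    rw [Finset.mul_sum]
    refine Finset.sum_congr rfl fun k hk => ?_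
    have hA := coefA α m k (Finset.mem_range.1 hk)
    push_cast
    push_cast at hA
    linear_combination x ^ (k + 1) * hA
  rw [Finset.sum_sub_distrib] at hS
  have hB := coefB α m
  have hC := coefC α m
  rw [show m + 2 = (m + 1) + 1 from rfl, eC1, eC2, eA, eB]
  push_cast at hS hB hC ⊢
  linear_combination hS + hB + x ^ (m + 1) * hC

/-- the factorization `-ℓ_m^{III,α} = A_m^{III,α+1} ∘ B_m^{III,α+1} + (m-α)`,
where `A_m^{III,α+1}[y](x) = x L_m^{-α-1}(-x) y'(x) - (m+1) L_{m+1}^{-α-2}(-x) y(x)` and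
`B_m^{III,α+1}[y](x) = y'(x)/L_m^{-α-1}(-x)`, on an open set where `L_m^{-α-1}(-x) ≠ 0`. -/
theorem typeIII_factorization (α : ℝ) (m : ℕ) (s : Set ℝ) (hs : IsOpen s)
    (hL : ∀ t ∈ s, lag (-α - 1) m (-t) ≠ 0)
    (y : ℝ → ℝ)
    (hy : ∀ t ∈ s, DifferentiableAt ℝ y t)
    (hy' : ∀ t ∈ s, DifferentiableAt ℝ (deriv y) t)
    (x : ℝ) (hx : x ∈ s) :
    x * lag (-α - 1) m (-x) * deriv (fun t => deriv y t / lag (-α - 1) m (-t)) x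
        - ((m : ℝ) + 1) * lag (-α - 2) (m + 1) (-x) * (deriv y x / lag (-α - 1) m (-x))
        + ((m : ℝ) - α) * y x
      = x * deriv (deriv y) x
        + (1 + α - x
            - 2 * x * (deriv (fun t => lag (-α - 1) m (-t)) x / lag (-α - 1) m (-x)))
            * deriv y x
        + ((m : ℝ) - α) * y x := by
  have hL0 : lag (-α - 1) m (-x) ≠ 0 := hL x hx
  have hDer : HasDerivAt (fun t => lag (-α - 1) m (-t))
      (∑ k ∈ Finset.range (m + 1), lc (-α - 1) m k * ((k : ℝ) * (-x) ^ (k - 1) * (-1))) x :=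
    hasDerivAt_lag_neg (-α - 1) m x
  set D : ℝ := deriv (fun t => lag (-α - 1) m (-t)) x with hDdef
  have hD : D = ∑ k ∈ Finset.range (m + 1), lc (-α - 1) m k * ((k : ℝ) * (-x) ^ (k - 1) * (-1)) :=
    hDer.deriv
  -- x * D
  have hxD : x * D = ∑ k ∈ Finset.range (m + 1), lc (-α - 1) m k * (k : ℝ) * (-x) ^ k := by
    rw [hD]; exact xD_eq (-α - 1) x m
  -- key identity transported
  have h1 : ∑ k ∈ Finset.range (m + 1), lc (-α - 1) m k * ((k : ℝ) - α - 1) * (-x) ^ k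
      = x * D - (α + 1) * lag (-α - 1) m (-x) := by
    rw [hxD, lag_eq_s12, Finset.mul_sum, ← Finset.sum_sub_distrib]
    refine Finset.sum_congr rfl fun k _ => ?_
    ring
  have h2 : ∑ k ∈ Finset.range (m + 1), lc (-α - 1) m k * (-x) ^ (k + 1)
      = -x * lag (-α - 1) m (-x) := by
    rw [lag_eq_s12, Finset.mul_sum]
    refine Finset.sum_congr rfl fun k _ => ?_
    rw [pow_succ]; ring
  have hR : x * D + (x - α - 1) * lag (-α - 1) m (-x)
      = ((m : ℝ) + 1) * lag (-α - 2) (m + 1) (-x) := by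
    have hk := key α (-x) m
    rw [h1, h2, ← lag_eq_s12] at hk
    linarith
  have hq : deriv (fun t => deriv y t / lag (-α - 1) m (-t)) x
      = (deriv (deriv y) x * lag (-α - 1) m (-x) - deriv y x * D) / (lag (-α - 1) m (-x)) ^ 2 := by
    rw [deriv_fun_div (hy' x hx) hDer.differentiableAt hL0, hDdef]
  rw [hq, ← hR]
  field_simp
  ring
end
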